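/- For every n ≥ 1 and every n×n density matrix ρ, the subentropy is bounded by 1 minus Euler's constant: Q(ρ) ≤ 1 − γ, where γ is the Euler–Mascheroni constant. Moreover, lim_{n→∞} (ln n − C_n) = 1 − γ, and the sequence (ln n − C_n) is monotonically increasing in n. -/

import Mathlib

open MeasureTheory Matrix
open scoped ComplexOrder

/-- η(y) = −y ln y (with ln 0 = 0 in Mathlib, so 0 ln 0 = 0). -/
noncomputable def eta (y : ℝ) : ℝ := -(y * Real.log y)

/-- C_n = 1/2 + 1/3 + ⋯ + 1/n (C_1 = 0). -/
noncomputable def harmC (n : ℕ) : ℝ := ∑ k ∈ Finset.Icc 2 n, (1 : ℝ) / k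

/-- Integral of a function over the probability simplex Δ_n with respect to the
normalized uniform measure dx = (n−1)! dx_1 ⋯ dx_{n−1}, realised in the coordinates
(x_1, …, x_{n−1}), with x_n = 1 − (x_1 + ⋯ + x_{n−1}). -/
noncomputable def simplexIntegral (n : ℕ) (f : (Fin n → ℝ) → ℝ) : ℝ :=
  ((n - 1).factorial : ℝ) *
    ∫ y in {y : Fin (n - 1) → ℝ | (∀ i, 0 ≤ y i) ∧ ∑ i, y i ≤ 1},
      f (fun i => if h : (i : ℕ) < n - 1 then y ⟨(i : ℕ), h⟩ else 1 - ∑ j, y j)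

/-- Subentropy of a probability vector: F(λ) = n ∫_{Δ_n} η(λ·x) dx − C_n. -/
noncomputable def subF (n : ℕ) (lam : Fin n → ℝ) : ℝ :=
  (n : ℝ) * simplexIntegral n (fun x => eta (∑ i, lam i * x i)) - harmC n

/-- Subentropy of a (Hermitian) matrix: Q(ρ) = F(λ(ρ)), the subentropy of its
eigenvalue vector (junk value 0 for non-Hermitian matrices). -/
noncomputable def Qmat {ι : Type} [Fintype ι] [DecidableEq ι] (ρ : Matrix ι ι ℂ) : ℝ :=
  if h : ρ.IsHermitian then
    subF (Fintype.card ι) (fun k => h.eigenvalues ((Fintype.equivFin ι).symm k))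
  else 0



def Sset (m : ℕ) (t : ℝ) : Set (Fin m → ℝ) := {y | (∀ i, 0 ≤ y i) ∧ ∑ i, y i ≤ t}

lemma measurableSet_Sset (m : ℕ) (t : ℝ) : MeasurableSet (Sset m t) := by
  have : Sset m t = (⋂ i, {y : Fin m → ℝ | 0 ≤ y i}) ∩ {y | ∑ i, y i ≤ t} := by
    ext y; simp [Sset]
  rw [this]
  exact (MeasurableSet.iInter fun i =>
      measurableSet_le measurable_const (measurable_pi_apply i)).inter
    (measurableSet_le (Finset.measurable_sum _ fun i _ => measurable_pi_apply i)
      measurable_const)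

lemma Sset_empty {m : ℕ} {t : ℝ} (ht : t < 0) : Sset m t = ∅ := by
  ext y
  simp only [Sset, Set.mem_setOf_eq, Set.mem_empty_iff_false, iff_false, not_and]
  intro hy
  have : (0:ℝ) ≤ ∑ i, y i := Finset.sum_nonneg fun i _ => hy i
  linarith

lemma Sset_section (m : ℕ) (t s : ℝ) (i : Fin (m+1)) :
    (fun y' : Fin m → ℝ => (s, y')) ⁻¹'
      ((MeasurableEquiv.piFinSuccAbove (fun _ : Fin (m+1) => ℝ) i).symm ⁻¹' Sset (m+1) t)
    = if 0 ≤ s then Sset m (t - s) else ∅ := by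
  ext y'
  simp only [Set.mem_preimage, MeasurableEquiv.piFinSuccAbove_symm_apply, Sset,
    Set.mem_setOf_eq, Fin.forall_iff_succAbove i, Fin.insertNthEquiv, Equiv.coe_fn_mk,
    Fin.insertNth_apply_same, Fin.insertNth_apply_succAbove, Fin.sum_univ_succAbove _ i]
  split_ifs with hs
  · simp only [Sset, Set.mem_setOf_eq, hs, true_and]
    constructor <;> rintro ⟨h1, h2⟩ <;> exact ⟨h1, by linarith⟩
  · simp [hs]

lemma volume_Sset (m : ℕ) : ∀ t : ℝ, 0 ≤ t →
    volume (Sset m t) = ENNReal.ofReal (t ^ m / m.factorial) := by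
  induction m with
  | zero =>
    intro t ht
    have h : Sset 0 t = Set.univ := by
      ext y; simp [Sset, ht]
    rw [h]
    rw [MeasureTheory.volume_pi, Measure.pi_univ]
    simp
  | succ m ih =>
    intro t ht
    have hmp := MeasureTheory.volume_preserving_piFinSuccAbove (fun _ : Fin (m+1) => ℝ) 0
    set e := MeasurableEquiv.piFinSuccAbove (fun _ : Fin (m+1) => ℝ) 0 with he
    have hS := measurableSet_Sset (m+1) t
    have h1 : volume (Sset (m+1) t) = volume (e.symm ⁻¹' Sset (m+1) t) :=
      ((MeasurePreserving.symm e hmp).measure_preimage hS.nullMeasurableSet).symm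
    rw [h1, Measure.volume_eq_prod, Measure.prod_apply (e.symm.measurable hS)]
    have h2 : ∀ s : ℝ, volume ((fun y' : Fin m → ℝ => (s, y')) ⁻¹' (e.symm ⁻¹' Sset (m+1) t))
        = Set.indicator (Set.Icc 0 t) (fun s => ENNReal.ofReal ((t-s)^m / m.factorial)) s := by
      intro s
      rw [Sset_section m t s 0]
      by_cases hs : 0 ≤ s
      · rw [if_pos hs]
        by_cases hst : s ≤ t
        · rw [Set.indicator_of_mem (Set.mem_Icc.mpr ⟨hs, hst⟩), ih (t - s) (by linarith)]
        · rw [Set.indicator_of_notMem (by simp [hst]), Sset_empty (by linarith)]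
          simp
      · rw [if_neg hs, Set.indicator_of_notMem (by simp [hs])]
        simp
    calc ∫⁻ s, volume ((fun y' : Fin m → ℝ => (s, y')) ⁻¹' (e.symm ⁻¹' Sset (m+1) t))
          = ∫⁻ s in Set.Icc 0 t, ENNReal.ofReal ((t-s)^m / m.factorial) := by
            simp_rw [h2]; rw [lintegral_indicator (measurableSet_Icc)]
      _ = ENNReal.ofReal (∫ s in Set.Icc 0 t, (t-s)^m / m.factorial) := by
            rw [← ofReal_integral_eq_lintegral_ofReal]
            · exact (Continuous.integrableOn_Icc (by fun_prop))
            · filter_upwards [MeasureTheory.self_mem_ae_restrict (measurableSet_Icc : MeasurableSet (Set.Icc 0 t))] with s hsmem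
              have : (0:ℝ) ≤ t - s := by linarith [hsmem.2]
              positivity
      _ = ENNReal.ofReal (t ^ (m+1) / (m+1).factorial) := by
            congr 1
            rw [MeasureTheory.integral_Icc_eq_integral_Ioc,
              ← intervalIntegral.integral_of_le ht]
            simp_rw [div_eq_mul_inv]
            rw [intervalIntegral.integral_mul_const,
              intervalIntegral.integral_comp_sub_left (fun x => x ^ m) t, sub_zero, sub_self,
              integral_pow]
            rw [Nat.factorial_succ]
            have hm1 : ((m:ℝ) + 1) ≠ 0 := by positivity
            field_simp
            rw [zero_pow (Nat.succ_ne_zero m)]; push_cast; ring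

lemma lintegral_coord (m : ℕ) (i : Fin (m+1)) (t : ℝ) (ht : 0 ≤ t) :
    ∫⁻ y in Sset (m+1) t, ENNReal.ofReal (y i)
      = ENNReal.ofReal (t ^ (m+2) / (m+2).factorial) := by
  have hmp := MeasureTheory.volume_preserving_piFinSuccAbove (fun _ : Fin (m+1) => ℝ) i
  set e := MeasurableEquiv.piFinSuccAbove (fun _ : Fin (m+1) => ℝ) i with he
  have hS := measurableSet_Sset (m+1) t
  set T : Set (ℝ × (Fin m → ℝ)) := e.symm ⁻¹' Sset (m+1) t with hT
  have hTm : MeasurableSet T := e.symm.measurable hS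
  have hfun : ∀ y : Fin (m+1) → ℝ,
      (Sset (m+1) t).indicator (fun y => ENNReal.ofReal (y i)) y
        = T.indicator (fun p => ENNReal.ofReal p.1) (e y) := by
    intro y
    have hmem : y ∈ Sset (m+1) t ↔ e y ∈ T := by
      rw [hT, Set.mem_preimage, MeasurableEquiv.symm_apply_apply]
    have hval : (e y).1 = y i := rfl
    by_cases hy : y ∈ Sset (m+1) t
    · rw [Set.indicator_of_mem hy, Set.indicator_of_mem (hmem.mp hy), hval]
    · rw [Set.indicator_of_notMem hy, Set.indicator_of_notMem (fun h => hy (hmem.mpr h))]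
  calc ∫⁻ y in Sset (m+1) t, ENNReal.ofReal (y i)
      = ∫⁻ y, (Sset (m+1) t).indicator (fun y => ENNReal.ofReal (y i)) y := by
        rw [← lintegral_indicator hS]
    _ = ∫⁻ y, T.indicator (fun p => ENNReal.ofReal p.1) (e y) := by
        simp_rw [hfun]
    _ = ∫⁻ p, T.indicator (fun p => ENNReal.ofReal p.1) p ∂(Measure.map e volume) := by
        rw [lintegral_map (Measurable.indicator (by fun_prop) hTm) e.measurable]
    _ = ∫⁻ p, T.indicator (fun p => ENNReal.ofReal p.1) p ∂((volume : Measure ℝ).prod volume) := by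
        rw [hmp.map_eq, Measure.volume_eq_prod]
    _ = ∫⁻ s, ∫⁻ y', T.indicator (fun p => ENNReal.ofReal p.1) (s, y') := by
        rw [lintegral_prod _ (Measurable.indicator (by fun_prop) hTm).aemeasurable]
    _ = ∫⁻ s, Set.indicator (Set.Icc 0 t)
          (fun s => ENNReal.ofReal (s * ((t-s)^m / m.factorial))) s := by
        congr 1; funext s
        have hsec : ∀ y' : Fin m → ℝ, T.indicator (fun p => ENNReal.ofReal p.1) (s, y')
            = ((fun y' : Fin m → ℝ => (s, y')) ⁻¹' T).indicator
                (fun _ => ENNReal.ofReal s) y' := by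
          intro y'
          by_cases h : (s, y') ∈ T
          · rw [Set.indicator_of_mem h,
              Set.indicator_of_mem (show y' ∈ (fun y' => (s, y')) ⁻¹' T from h)]
          · rw [Set.indicator_of_notMem h,
              Set.indicator_of_notMem (show y' ∉ (fun y' => (s, y')) ⁻¹' T from h)]
        simp_rw [hsec, hT, he, Sset_section m t s i]
        by_cases hs : 0 ≤ s
        · rw [if_pos hs]
          by_cases hst : s ≤ t
          · rw [Set.indicator_of_mem (Set.mem_Icc.mpr ⟨hs, hst⟩),
              lintegral_indicator (measurableSet_Sset m (t-s)), lintegral_const,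
              Measure.restrict_apply MeasurableSet.univ, Set.univ_inter,
              volume_Sset m (t-s) (by linarith), ← ENNReal.ofReal_mul hs]
          · rw [Set.indicator_of_notMem (by simp [hst]), Sset_empty (show t - s < 0 by linarith)]
            simp
        · rw [if_neg hs, Set.indicator_of_notMem (by simp [hs])]
          simp
    _ = ∫⁻ s in Set.Icc 0 t, ENNReal.ofReal (s * ((t-s)^m / m.factorial)) := by
        rw [lintegral_indicator measurableSet_Icc]
    _ = ENNReal.ofReal (∫ s in Set.Icc 0 t, s * ((t-s)^m / m.factorial)) := by
        rw [← ofReal_integral_eq_lintegral_ofReal]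
        · exact (Continuous.integrableOn_Icc (by fun_prop))
        · filter_upwards [MeasureTheory.self_mem_ae_restrict
            (measurableSet_Icc : MeasurableSet (Set.Icc 0 t))] with s hsmem
          have h1 : (0:ℝ) ≤ s := hsmem.1
          have h2 : (0:ℝ) ≤ t - s := by linarith [hsmem.2]
          positivity
    _ = ENNReal.ofReal (t ^ (m+2) / (m+2).factorial) := by
        congr 1
        rw [MeasureTheory.integral_Icc_eq_integral_Ioc, ← intervalIntegral.integral_of_le ht]
        have : ∀ s : ℝ, s * ((t-s)^m / m.factorial) = (s * (t-s)^m) * ((m.factorial : ℝ))⁻¹ := by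
          intro s; ring
        simp_rw [this]
        rw [intervalIntegral.integral_mul_const]
        have hsub : (∫ x in (0:ℝ)..t, x * (t-x)^m)
            = ∫ x in (0:ℝ)..t, (t - x) * x^m := by
          have := intervalIntegral.integral_comp_sub_left (a := (0:ℝ)) (b := t)
            (fun u => (t - u) * u ^ m) t
          simp only [sub_zero, sub_self] at this
          rw [← this]
          congr 1; funext x; ring_nf
        rw [hsub]
        have hint : (∫ x in (0:ℝ)..t, (t - x) * x^m)
            = ∫ x in (0:ℝ)..t, (t * x^m - x^(m+1)) := by
          congr 1; funext x; ring
        rw [hint, intervalIntegral.integral_sub (by apply Continuous.intervalIntegrable; fun_prop)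
          (by apply Continuous.intervalIntegrable; fun_prop),
          intervalIntegral.integral_const_mul, integral_pow, integral_pow]
        have h1 : ((m:ℝ)+1) ≠ 0 := by positivity
        have h2 : ((m:ℝ)+2) ≠ 0 := by positivity
        have h3 : ((m.factorial : ℝ)) ≠ 0 := by positivity
        rw [show (m+2).factorial = (m+2)*(m+1)*m.factorial by
          rw [show m+2 = (m+1)+1 from rfl, Nat.factorial_succ, Nat.factorial_succ]; ring]
        push_cast
        field_simp
        ring


lemma harmC_eq (n : ℕ) (hn : 1 ≤ n) : harmC n = (harmonic n : ℝ) - 1 := by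
  induction n with
  | zero => omega
  | succ m ih =>
    rcases Nat.eq_zero_or_pos m with rfl | hm
    · simp [harmC, harmonic]
    · have : harmC (m + 1) = harmC m + 1 / (m + 1) := by
        rw [harmC, harmC, Finset.sum_Icc_succ_top (by omega)]; push_cast; ring_nf
      rw [this, ih hm, harmonic_succ]
      push_cast
      ring

lemma log_sub_harmC (n : ℕ) (hn : 1 ≤ n) :
    Real.log n - harmC n = 1 - Real.eulerMascheroniSeq' n := by
  rw [harmC_eq n hn, Real.eulerMascheroniSeq', if_neg (by omega)]
  ring

lemma log_sub_harmC_le (n : ℕ) (hn : 1 ≤ n) :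
    Real.log n - harmC n ≤ 1 - Real.eulerMascheroniConstant := by
  rw [log_sub_harmC n hn]
  have := Real.eulerMascheroniConstant_lt_eulerMascheroniSeq' n
  linarith

lemma part2 : Filter.Tendsto (fun n : ℕ => Real.log n - harmC n) Filter.atTop
      (nhds (1 - Real.eulerMascheroniConstant)) := by
  apply Filter.Tendsto.congr' (f₁ := fun n => 1 - Real.eulerMascheroniSeq' n)
  · filter_upwards [Filter.eventually_ge_atTop 1] with n hn
    exact (log_sub_harmC n hn).symm
  · exact (tendsto_const_nhds).sub Real.tendsto_eulerMascheroniSeq'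

lemma part3 : StrictMonoOn (fun n : ℕ => Real.log n - harmC n) (Set.Ici 1) := by
  intro a ha b hb hab
  simp only [log_sub_harmC a ha, log_sub_harmC b hb]
  have := Real.strictAnti_eulerMascheroniSeq' hab
  linarith


lemma eta_eq : eta = Real.negMulLog := by
  funext x; simp [eta, Real.negMulLog, neg_mul]

lemma negMulLog_le_one {x : ℝ} (hx : 0 ≤ x) : Real.negMulLog x ≤ 1 := by
  rcases eq_or_lt_of_le hx with h | h
  · simp [← h]
  · have hinv : Real.log x⁻¹ ≤ x⁻¹ - 1 := Real.log_le_sub_one_of_pos (by positivity)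
    have : Real.negMulLog x = x * Real.log x⁻¹ := by
      simp [Real.negMulLog, Real.log_inv]
    rw [this]
    calc x * Real.log x⁻¹ ≤ x * (x⁻¹ - 1) := by
          exact mul_le_mul_of_nonneg_left hinv hx
      _ = 1 - x := by field_simp
      _ ≤ 1 := by linarith

lemma volume_Sset_one (m : ℕ) :
    volume (Sset m 1) = ENNReal.ofReal (1 / m.factorial) := by
  simpa using volume_Sset m 1 zero_le_one

lemma volume_Sset_one_ne_zero (m : ℕ) : volume (Sset m 1) ≠ 0 := by
  rw [volume_Sset_one]
  simp only [ne_eq, ENNReal.ofReal_eq_zero, not_le]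
  positivity

lemma volume_Sset_one_ne_top (m : ℕ) : volume (Sset m 1) ≠ ⊤ := by
  rw [volume_Sset_one]; exact ENNReal.ofReal_ne_top

lemma volume_Sset_one_toReal (m : ℕ) :
    (volume (Sset m 1)).toReal = 1 / m.factorial := by
  rw [volume_Sset_one, ENNReal.toReal_ofReal (by positivity)]

lemma coord_le_one {m : ℕ} {y : Fin m → ℝ} (hy : y ∈ Sset m 1) (i : Fin m) : y i ≤ 1 := by
  calc y i ≤ ∑ j, y j := Finset.single_le_sum (fun j _ => hy.1 j) (Finset.mem_univ i)
    _ ≤ 1 := hy.2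

lemma integrableOn_coord (m : ℕ) (i : Fin m) :
    IntegrableOn (fun y : Fin m → ℝ => y i) (Sset m 1) volume := by
  apply Measure.integrableOn_of_bounded (M := 1) (volume_Sset_one_ne_top m)
    (measurable_pi_apply i).aestronglyMeasurable
  filter_upwards [MeasureTheory.self_mem_ae_restrict (measurableSet_Sset m 1)] with y hy
  rw [Real.norm_eq_abs, abs_le]
  exact ⟨by linarith [hy.1 i], coord_le_one hy i⟩

lemma integral_coord (m : ℕ) (i : Fin m) :
    ∫ y in Sset m 1, y i = 1 / (m+1).factorial := by
  cases m with
  | zero => exact i.elim0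
  | succ k =>
    rw [MeasureTheory.integral_eq_lintegral_of_nonneg_ae]
    · rw [lintegral_coord k i 1 zero_le_one, one_pow,
        ENNReal.toReal_ofReal (by positivity)]
    · filter_upwards [MeasureTheory.self_mem_ae_restrict (measurableSet_Sset (k+1) 1)] with y hy
      exact hy.1 i
    · exact (measurable_pi_apply i).aestronglyMeasurable

lemma integral_slack (m : ℕ) :
    ∫ y in Sset m 1, (1 - ∑ j, y j) = 1 / (m+1).factorial := by
  have hsumint : IntegrableOn (fun y : Fin m → ℝ => ∑ j, y j) (Sset m 1) volume := by
    apply MeasureTheory.integrable_finset_sum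
    intro j _
    exact integrableOn_coord m j
  have hconst : IntegrableOn (fun _ : Fin m → ℝ => (1:ℝ)) (Sset m 1) volume :=
    (integrableOn_const_iff (by simp)).mpr (Or.inr (lt_of_le_of_ne le_top (volume_Sset_one_ne_top m)))
  rw [MeasureTheory.integral_sub hconst hsumint, MeasureTheory.integral_finset_sum
    _ (fun j _ => integrableOn_coord m j)]
  simp_rw [integral_coord]
  rw [MeasureTheory.setIntegral_const, measureReal_def, volume_Sset_one_toReal, smul_eq_mul, mul_one]
  rw [Finset.sum_const, Finset.card_univ, Fintype.card_fin, nsmul_eq_mul]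
  rw [Nat.factorial_succ]
  have h1 : ((m:ℝ)+1) ≠ 0 := by positivity
  have h3 : ((m.factorial : ℝ)) ≠ 0 := by positivity
  push_cast
  field_simp
  ring

noncomputable def Gfun (m : ℕ) (lam : Fin (m+1) → ℝ) : (Fin m → ℝ) → ℝ :=
  fun y => ∑ i, lam i * (if h : (i : ℕ) < m then y ⟨(i : ℕ), h⟩ else 1 - ∑ j, y j)

lemma Xmeas (m : ℕ) (i : Fin (m+1)) :
    Measurable (fun y : Fin m → ℝ => if h : (i : ℕ) < m then y ⟨(i : ℕ), h⟩ else 1 - ∑ j, y j) := by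
  split_ifs with h
  · exact measurable_pi_apply _
  · exact measurable_const.sub (Finset.measurable_sum _ fun j _ => measurable_pi_apply j)

lemma Xint (m : ℕ) (i : Fin (m+1)) :
    IntegrableOn (fun y : Fin m → ℝ => if h : (i : ℕ) < m then y ⟨(i : ℕ), h⟩ else 1 - ∑ j, y j)
      (Sset m 1) volume := by
  by_cases h : (i : ℕ) < m
  · simp only [dif_pos h]; exact integrableOn_coord m ⟨(i : ℕ), h⟩
  · simp only [dif_neg h]
    have hsumint : IntegrableOn (fun y : Fin m → ℝ => ∑ j, y j) (Sset m 1) volume :=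
      MeasureTheory.integrable_finset_sum _ (fun j _ => integrableOn_coord m j)
    have hconst : IntegrableOn (fun _ : Fin m → ℝ => (1:ℝ)) (Sset m 1) volume :=
      (integrableOn_const_iff (by simp)).mpr (Or.inr (lt_of_le_of_ne le_top (volume_Sset_one_ne_top m)))
    exact hconst.sub hsumint

lemma Xval (m : ℕ) (i : Fin (m+1)) :
    ∫ y in Sset m 1, (if h : (i : ℕ) < m then y ⟨(i : ℕ), h⟩ else 1 - ∑ j, y j)
      = 1 / (m+1).factorial := by
  by_cases h : (i : ℕ) < m
  · simp only [dif_pos h]; exact integral_coord m ⟨(i : ℕ), h⟩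
  · simp only [dif_neg h]; exact integral_slack m

lemma X01 (m : ℕ) (i : Fin (m+1)) {y : Fin m → ℝ} (hy : y ∈ Sset m 1) :
    (if h : (i : ℕ) < m then y ⟨(i : ℕ), h⟩ else 1 - ∑ j, y j) ∈ Set.Icc (0:ℝ) 1 := by
  have hs0 : (0:ℝ) ≤ ∑ j, y j := Finset.sum_nonneg fun j _ => hy.1 j
  by_cases h : (i : ℕ) < m
  · simp only [dif_pos h]
    exact ⟨hy.1 _, coord_le_one hy _⟩
  · simp only [dif_neg h]
    exact ⟨by linarith [hy.2], by linarith⟩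

lemma Gfun_int (m : ℕ) (lam : Fin (m+1) → ℝ) :
    IntegrableOn (Gfun m lam) (Sset m 1) volume :=
  MeasureTheory.integrable_finset_sum _ (fun i _ => (Xint m i).const_mul (lam i))

lemma Gfun_meas (m : ℕ) (lam : Fin (m+1) → ℝ) : Measurable (Gfun m lam) :=
  Finset.measurable_sum _ (fun i _ => (Xmeas m i).const_mul (lam i))

lemma Gfun_mem {m : ℕ} {lam : Fin (m+1) → ℝ} (h0 : ∀ i, 0 ≤ lam i) (h1 : ∑ i, lam i = 1)
    {y : Fin m → ℝ} (hy : y ∈ Sset m 1) : Gfun m lam y ∈ Set.Icc (0:ℝ) 1 := by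
  constructor
  · exact Finset.sum_nonneg fun i _ => mul_nonneg (h0 i) (X01 m i hy).1
  · calc Gfun m lam y ≤ ∑ i, lam i * 1 :=
        Finset.sum_le_sum fun i _ => mul_le_mul_of_nonneg_left (X01 m i hy).2 (h0 i)
      _ = 1 := by simp [h1]

lemma Gfun_integral {m : ℕ} (lam : Fin (m+1) → ℝ) (h1 : ∑ i, lam i = 1) :
    ∫ y in Sset m 1, Gfun m lam y = 1 / (m+1).factorial := by
  unfold Gfun
  rw [MeasureTheory.integral_finset_sum _ (fun i _ => (Xint m i).const_mul (lam i))]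
  simp_rw [MeasureTheory.integral_const_mul, Xval]
  rw [← Finset.sum_mul, h1, one_mul]

lemma key_jensen (m : ℕ) (lam : Fin (m+1) → ℝ) (h0 : ∀ i, 0 ≤ lam i) (h1 : ∑ i, lam i = 1) :
    (m.factorial : ℝ) * ∫ y in Sset m 1, Real.negMulLog (Gfun m lam y)
      ≤ Real.log (m+1) / (m+1) := by
  have hmem : ∀ᵐ y ∂(volume.restrict (Sset m 1)), Gfun m lam y ∈ Set.Ici (0:ℝ) := by
    filter_upwards [MeasureTheory.self_mem_ae_restrict (measurableSet_Sset m 1)] with y hy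
    exact (Gfun_mem h0 h1 hy).1
  have hetaint : IntegrableOn (Real.negMulLog ∘ Gfun m lam) (Sset m 1) volume := by
    apply Measure.integrableOn_of_bounded (M := 1) (volume_Sset_one_ne_top m)
      (Real.continuous_negMulLog.measurable.comp (Gfun_meas m lam)).aestronglyMeasurable
    filter_upwards [MeasureTheory.self_mem_ae_restrict (measurableSet_Sset m 1)] with y hy
    have h01 := Gfun_mem h0 h1 hy
    rw [Function.comp_apply, Real.norm_eq_abs, abs_le]
    exact ⟨by linarith [Real.negMulLog_nonneg h01.1 h01.2], negMulLog_le_one h01.1⟩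
  have hjen := ConcaveOn.le_map_set_average (μ := volume) (t := Sset m 1)
    Real.concaveOn_negMulLog Real.continuous_negMulLog.continuousOn isClosed_Ici
    (volume_Sset_one_ne_zero m) (volume_Sset_one_ne_top m) hmem (Gfun_int m lam) hetaint
  rw [MeasureTheory.setAverage_eq, MeasureTheory.setAverage_eq, measureReal_def, volume_Sset_one_toReal,
    Gfun_integral lam h1, smul_eq_mul, smul_eq_mul] at hjen
  have hfac : ((m.factorial : ℝ))⁻¹ ≠ 0 := by positivity
  have hmul : ((1:ℝ) / m.factorial)⁻¹ * (1 / (m+1).factorial) = 1 / ((m:ℝ)+1) := by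
    rw [Nat.factorial_succ, one_div, inv_inv]
    push_cast
    have h1' : ((m:ℝ)+1) ≠ 0 := by positivity
    have h3 : ((m.factorial : ℝ)) ≠ 0 := by positivity
    field_simp
  rw [hmul] at hjen
  have hlog : Real.negMulLog (1 / ((m:ℝ)+1)) = Real.log ((m:ℝ)+1) / ((m:ℝ)+1) := by
    rw [Real.negMulLog, one_div, Real.log_inv]
    ring
  rw [hlog] at hjen
  have hiv : ((1:ℝ) / m.factorial)⁻¹ = (m.factorial : ℝ) := by
    rw [one_div, inv_inv]
  rw [hiv] at hjen
  have : ((m:ℕ)+1 : ℝ) = (m:ℝ)+1 := by push_cast; ring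
  calc (m.factorial : ℝ) * ∫ y in Sset m 1, Real.negMulLog (Gfun m lam y) ≤
        Real.log ((m:ℝ)+1) / ((m:ℝ)+1) := hjen
    _ = Real.log ((m:ℕ)+1 : ℝ) / (((m:ℕ):ℝ)+1) := by norm_num

lemma simplexIntegral_eq (m : ℕ) (lam : Fin (m+1) → ℝ) :
    simplexIntegral (m+1) (fun x => eta (∑ i, lam i * x i))
      = (m.factorial : ℝ) * ∫ y in Sset m 1, Real.negMulLog (Gfun m lam y) := by
  have h : (fun x : Fin (m+1) → ℝ => eta (∑ i, lam i * x i))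
      = (fun x => Real.negMulLog (∑ i, lam i * x i)) := by
    funext x; rw [eta_eq]
  rw [h]
  rfl

lemma subF_succ_le (m : ℕ) (lam : Fin (m+1) → ℝ) (h0 : ∀ i, 0 ≤ lam i)
    (h1 : ∑ i, lam i = 1) :
    subF (m+1) lam ≤ Real.log ((m:ℝ)+1) - harmC (m+1) := by
  rw [subF, simplexIntegral_eq]
  have hj := key_jensen m lam h0 h1
  have hpos : (0:ℝ) < (m:ℝ)+1 := by positivity
  have hc : ((m+1:ℕ):ℝ) = (m:ℝ)+1 := by push_cast; ring
  rw [hc]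
  have hmul : ((m:ℝ)+1) * ((m.factorial:ℝ) * ∫ y in Sset m 1, Real.negMulLog (Gfun m lam y))
      ≤ ((m:ℝ)+1) * (Real.log ((m:ℝ)+1) / ((m:ℝ)+1)) := by
    apply mul_le_mul_of_nonneg_left _ (le_of_lt hpos)
    convert hj using 2 <;> push_cast <;> ring
  have heq : ((m:ℝ)+1) * (Real.log ((m:ℝ)+1) / ((m:ℝ)+1)) = Real.log ((m:ℝ)+1) := by
    field_simp
  linarith

lemma subF_le (N : ℕ) (hN : 1 ≤ N) (lam : Fin N → ℝ) (h0 : ∀ i, 0 ≤ lam i)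
    (h1 : ∑ i, lam i = 1) :
    subF N lam ≤ Real.log N - harmC N := by
  cases N with
  | zero => omega
  | succ m =>
    have := subF_succ_le m lam h0 h1
    have hc : ((m+1:ℕ):ℝ) = (m:ℝ)+1 := by push_cast; ring
    rw [hc]
    exact this


lemma trace_eq_sum_eigs {n : ℕ} (ρ : Matrix (Fin n) (Fin n) ℂ) (hherm : ρ.IsHermitian) :
    ρ.trace = ∑ i, (hherm.eigenvalues i : ℂ) := by
  exact hherm.trace_eq_sum_eigenvalues

lemma eig_sum_one {n : ℕ} (ρ : Matrix (Fin n) (Fin n) ℂ) (hherm : ρ.IsHermitian)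
    (htr : ρ.trace = 1) : ∑ i, hherm.eigenvalues i = 1 := by
  have h := trace_eq_sum_eigs ρ hherm
  rw [htr] at h
  have : ((∑ i, hherm.eigenvalues i : ℝ) : ℂ) = 1 := by push_cast [← h]; norm_cast
  exact_mod_cast this


/-- Q(ρ) ≤ 1 − γ for every density matrix; ln n − C_n → 1 − γ;
and ln n − C_n is monotonically increasing in n (for n ≥ 1). -/
theorem subentropy_le_one_sub_gamma :
    (∀ (n : ℕ), 1 ≤ n → ∀ (ρ : Matrix (Fin n) (Fin n) ℂ), ρ.PosSemidef → ρ.trace = 1 →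
      Qmat ρ ≤ 1 - Real.eulerMascheroniConstant) ∧
    Filter.Tendsto (fun n : ℕ => Real.log n - harmC n) Filter.atTop
      (nhds (1 - Real.eulerMascheroniConstant)) ∧
    StrictMonoOn (fun n : ℕ => Real.log n - harmC n) (Set.Ici 1) := by
  refine ⟨?_, part2, part3⟩
  intro n hn ρ hpsd htr
  have hherm : ρ.IsHermitian := hpsd.isHermitian
  unfold Qmat
  rw [dif_pos hherm]
  have hN : 1 ≤ Fintype.card (Fin n) := by rw [Fintype.card_fin]; exact hn
  have h0 : ∀ k : Fin (Fintype.card (Fin n)),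
      0 ≤ hherm.eigenvalues ((Fintype.equivFin (Fin n)).symm k) := fun k => by
    have := hpsd.eigenvalues_nonneg ((Fintype.equivFin (Fin n)).symm k)
    convert this using 2
  have h1 : ∑ k, hherm.eigenvalues ((Fintype.equivFin (Fin n)).symm k) = 1 := by
    rw [Equiv.sum_comp (Fintype.equivFin (Fin n)).symm hherm.eigenvalues]
    exact eig_sum_one ρ hherm htr
  exact le_trans (subF_le _ hN _ h0 h1) (log_sub_harmC_le _ hN)
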